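/- For n ≥ 3, the commuting graph Δ(B_n) is connected and has diameter 2: any two distinct non-adjacent vertices have a common neighbor. -/

import Mathlib

/-- Multiplication of nonzero elements of the Brandt semigroup `B_n`:
`(i,j)·(k,l) = (i,l)` if `j = k`, and `0` (here `none`) otherwise. -/
def brandtMul {n : ℕ} (x y : Fin n × Fin n) : Option (Fin n × Fin n) :=
  if x.2 = y.1 then some (x.1, y.2) else none

/-- The commuting graph of the Brandt semigroup `B_n`. -/
def brandtGraph (n : ℕ) : SimpleGraph (Fin n × Fin n) where
  Adj x y := x ≠ y ∧ brandtMul x y = brandtMul y x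
  symm := ⟨by intro x y h; exact ⟨h.1.symm, h.2.symm⟩⟩
  loopless := ⟨by intro x h; exact h.1 rfl⟩

instance {n : ℕ} : DecidableRel (brandtGraph n).Adj :=
  fun x y => decidable_of_iff (x ≠ y ∧ brandtMul x y = brandtMul y x) Iff.rfl

lemma brandt_adj_iff {n : ℕ} {x y : Fin n × Fin n} :
    (brandtGraph n).Adj x y ↔ x ≠ y ∧ x.2 ≠ y.1 ∧ y.2 ≠ x.1 := by
  constructor
  · rintro ⟨hne, hmul⟩
    unfold brandtMul at hmul
    refine ⟨hne, ?_, ?_⟩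
    · intro h1
      rw [if_pos h1] at hmul
      by_cases h2 : y.2 = x.1
      · rw [if_pos h2] at hmul
        simp only [Option.some.injEq, Prod.mk.injEq] at hmul
        exact hne (Prod.ext hmul.1 hmul.2.symm)
      · rw [if_neg h2] at hmul; simp at hmul
    · intro h2
      rw [if_pos h2] at hmul
      by_cases h1 : x.2 = y.1
      · rw [if_pos h1] at hmul
        simp only [Option.some.injEq, Prod.mk.injEq] at hmul
        exact hne (Prod.ext hmul.1 hmul.2.symm)
      · rw [if_neg h1] at hmul; simp at hmul
  · rintro ⟨hne, h1, h2⟩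
    refine ⟨hne, ?_⟩
    unfold brandtMul
    rw [if_neg h1, if_neg h2]

lemma exists_ne_ne {n : ℕ} (hn : 3 ≤ n) (b d : Fin n) : ∃ e : Fin n, e ≠ b ∧ e ≠ d := by
  by_contra h
  push_neg at h
  have hsub : (Finset.univ : Finset (Fin n)) ⊆ {b, d} := by
    intro e _
    simp only [Finset.mem_insert, Finset.mem_singleton]
    rcases eq_or_ne e b with h' | h'
    · exact Or.inl h'
    · exact Or.inr (h e h')
  have hc := Finset.card_le_card hsub
  rw [Finset.card_univ, Fintype.card_fin] at hc
  have h2 : ({b, d} : Finset (Fin n)).card ≤ 2 :=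
    (Finset.card_insert_le _ _).trans (by simp)
  omega

lemma brandt_common_neighbor {n : ℕ} (hn : 3 ≤ n) (u v : Fin n × Fin n)
    (hne : u ≠ v) (hadj : ¬ (brandtGraph n).Adj u v) :
    ∃ w, (brandtGraph n).Adj u w ∧ (brandtGraph n).Adj w v := by
  obtain ⟨a, b⟩ := u
  obtain ⟨c, d⟩ := v
  rw [brandt_adj_iff] at hadj
  push_neg at hadj
  have hcase : b = c ∨ d = a := by
    by_cases h1 : (b : Fin n) = c
    · exact Or.inl h1
    · exact Or.inr (hadj hne h1)
  obtain ⟨e, heb, hed⟩ := exists_ne_ne hn b d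
  obtain ⟨f, hfa, hfc⟩ := exists_ne_ne hn a c
  refine ⟨(e, f), brandt_adj_iff.mpr ⟨?_, heb.symm, hfa⟩,
    brandt_adj_iff.mpr ⟨?_, hfc, hed.symm⟩⟩
  · rcases hcase with h | h
    · intro hw
      obtain ⟨h1', h2'⟩ := Prod.ext_iff.mp hw
      exact hfc (h2'.symm.trans h)
    · intro hw
      obtain ⟨h1', h2'⟩ := Prod.ext_iff.mp hw
      exact hed (h1'.symm.trans h.symm)
  · rcases hcase with h | h
    · intro hw
      obtain ⟨h1', h2'⟩ := Prod.ext_iff.mp hw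
      exact heb (h1'.trans h.symm)
    · intro hw
      obtain ⟨h1', h2'⟩ := Prod.ext_iff.mp hw
      exact hfa (h2'.trans h)

theorem brandt_connected_diam (n : ℕ) (hn : 3 ≤ n) :
    (brandtGraph n).Connected ∧ (brandtGraph n).diam = 2 ∧
    ∀ u v : Fin n × Fin n, u ≠ v → ¬ (brandtGraph n).Adj u v →
      ∃ w, (brandtGraph n).Adj u w ∧ (brandtGraph n).Adj w v := by
  have hedist : ∀ u v : Fin n × Fin n, (brandtGraph n).edist u v ≤ 2 := by
    intro u v
    rcases eq_or_ne u v with rfl | hne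
    · simp [SimpleGraph.edist_self]
    by_cases hadj : (brandtGraph n).Adj u v
    · calc (brandtGraph n).edist u v ≤ 1 :=
            le_of_eq (SimpleGraph.edist_eq_one_iff_adj.mpr hadj)
        _ ≤ 2 := by norm_num
    obtain ⟨w, h1, h2⟩ := brandt_common_neighbor hn u v hne hadj
    have := SimpleGraph.edist_le ((h1.toWalk).append h2.toWalk)
    simpa using this
  have hconn : (brandtGraph n).Connected := by
    rw [SimpleGraph.connected_iff]
    refine ⟨fun u v => ?_, ⟨(⟨0, by omega⟩, ⟨0, by omega⟩)⟩⟩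
    exact SimpleGraph.reachable_of_edist_ne_top (by
      intro h
      have := hedist u v
      rw [h] at this
      exact absurd this (by norm_num))
  have hediam : (brandtGraph n).ediam = 2 := by
    apply le_antisymm (SimpleGraph.ediam_le_of_edist_le hedist)
    set a : Fin n := ⟨0, by omega⟩
    set b : Fin n := ⟨1, by omega⟩
    have hab : a ≠ b := by simp [a, b, Fin.ext_iff]
    have huv : ((a, b) : Fin n × Fin n) ≠ (b, a) := by
      simp [Prod.ext_iff, hab]
    have hnadj : ¬ (brandtGraph n).Adj (a, b) (b, a) := by
      rw [brandt_adj_iff]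
      rintro ⟨_, h, _⟩
      exact h rfl
    have h1 : (brandtGraph n).edist (a, b) (b, a) ≠ 1 :=
      fun h => hnadj (SimpleGraph.edist_eq_one_iff_adj.mp h)
    have h0 : (brandtGraph n).edist (a, b) (b, a) ≠ 0 :=
      fun h => huv (SimpleGraph.edist_eq_zero_iff.mp h)
    have hlt : 1 < (brandtGraph n).edist (a, b) (b, a) :=
      lt_of_le_of_ne (Order.one_le_iff_pos.mpr (pos_iff_ne_zero.mpr h0)) (Ne.symm h1)
    calc (2 : ℕ∞) = 1 + 1 := by norm_num
      _ ≤ (brandtGraph n).edist (a, b) (b, a) := Order.add_one_le_of_lt hlt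
      _ ≤ (brandtGraph n).ediam := SimpleGraph.edist_le_ediam
  refine ⟨hconn, ?_, fun u v => brandt_common_neighbor hn u v⟩
  rw [SimpleGraph.diam, hediam]
  rfl
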